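/- Let P ⊂ ℝ³ be the octahedron with vertices ±e₁, ±e₂, ±(a,b,c) where 0 ≤ a ≤ b ≤ c/2 and c ≥ 1. If P is Fano (the only non-vertex lattice point of P is the origin, strictly interior), then either (a,b,c) = (0,0,1) or (a,b,c) = (1,1,2). -/

import Mathlib

noncomputable def toR (x : Fin 3 → ℤ) : Fin 3 → ℝ := fun i => (x i : ℝ)

/-- A convex lattice polytope (given by its vertex set `V ⊂ ℤ³`) is *Fano* if the only
non-vertex lattice point it contains is the origin, which lies strictly in its interior. -/
def IsFanoPolytope (V : Set (Fin 3 → ℤ)) : Prop :=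
  (0 : Fin 3 → ℝ) ∈ interior (convexHull ℝ (toR '' V)) ∧
  ∀ p : Fin 3 → ℤ, toR p ∈ convexHull ℝ (toR '' V) → p = 0 ∨ p ∈ V

lemma toR_eq (x y z : ℤ) : toR ![x, y, z] = ![(x:ℝ), (y:ℝ), (z:ℝ)] := by
  funext i; fin_cases i <;> simp [toR]

lemma sum_mem_hull {n : ℕ} {s : Set (Fin 3 → ℝ)} (w : Fin n → ℝ) (z : Fin n → (Fin 3 → ℝ))
    (hz : ∀ i, z i ∈ s) (hw : ∀ i, 0 ≤ w i) (hsum : ∑ i, w i = 1) :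
    (∑ i, w i • z i) ∈ convexHull ℝ s :=
  (convex_convexHull ℝ s).sum_mem (fun i _ => hw i) hsum
    (fun i _ => subset_convexHull ℝ s (hz i))

theorem fano_octahedron_classification
    (a b c : ℤ) (ha : 0 ≤ a) (hab : a ≤ b) (hbc : 2 * b ≤ c) (hc : 1 ≤ c)
    (hfano : IsFanoPolytope
      ({![1, 0, 0], ![-1, 0, 0], ![0, 1, 0], ![0, -1, 0], ![a, b, c], ![-a, -b, -c]} :
        Set (Fin 3 → ℤ))) :
    (a, b, c) = (0, 0, 1) ∨ (a, b, c) = (1, 1, 2) := by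
  obtain ⟨-, hmem⟩ := hfano
  set V : Set (Fin 3 → ℤ) :=
    {![1, 0, 0], ![-1, 0, 0], ![0, 1, 0], ![0, -1, 0], ![a, b, c], ![-a, -b, -c]} with hV
  have hv1 : (![1,0,0] : Fin 3 → ℝ) ∈ toR '' V :=
    ⟨![1,0,0], by simp [hV], by rw [toR_eq]; norm_num⟩
  have hv2 : (![-1,0,0] : Fin 3 → ℝ) ∈ toR '' V :=
    ⟨![-1,0,0], by simp [hV], by rw [toR_eq]; norm_num⟩
  have hv3 : (![0,1,0] : Fin 3 → ℝ) ∈ toR '' V :=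
    ⟨![0,1,0], by simp [hV], by rw [toR_eq]; norm_num⟩
  have hv4 : (![0,-1,0] : Fin 3 → ℝ) ∈ toR '' V :=
    ⟨![0,-1,0], by simp [hV], by rw [toR_eq]; norm_num⟩
  have hv5 : (![(a:ℝ),(b:ℝ),(c:ℝ)] : Fin 3 → ℝ) ∈ toR '' V :=
    ⟨![a,b,c], by simp [hV], toR_eq a b c⟩
  -- Step 1: if 2 ≤ c and a + b + 1 ≤ c, then (0,0,1) ∈ P : contradiction
  have key1 : 2 ≤ c → a + b + 1 ≤ c → False := by
    intro hc2 habc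
    have hC : (0:ℝ) < (c:ℝ) := by exact_mod_cast lt_of_lt_of_le one_pos hc
    have hcne : (c:ℝ) ≠ 0 := ne_of_gt hC
    have hA : (0:ℝ) ≤ (a:ℝ) := by exact_mod_cast ha
    have hB : (0:ℝ) ≤ (b:ℝ) := by exact_mod_cast le_trans ha hab
    have hABC : (a:ℝ) + b + 1 ≤ c := by exact_mod_cast habc
    set r : ℝ := ((c:ℝ) - 1 - a - b) / c with hr
    have hr0 : 0 ≤ r := by apply div_nonneg _ hC.le; linarith
    have hac : (0:ℝ) ≤ (a:ℝ)/c := div_nonneg hA hC.le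
    have hbc' : (0:ℝ) ≤ (b:ℝ)/c := div_nonneg hB hC.le
    have hP : toR ![0,0,1] ∈ convexHull ℝ (toR '' V) := by
      rw [toR_eq]
      have := sum_mem_hull (s := toR '' V)
        ![1/(c:ℝ), (a:ℝ)/c + r/2, r/2, (b:ℝ)/c]
        ![![(a:ℝ),(b:ℝ),(c:ℝ)], ![-1,0,0], ![1,0,0], ![0,-1,0]]
        (by intro i; fin_cases i <;> simpa using ‹_›)
        (by intro i; fin_cases i <;> simp <;> linarith [hC, hac, hr0, hbc', one_div_pos.mpr hC])
        (by simp [Fin.sum_univ_four, Matrix.vecHead, Matrix.vecTail]; field_simp [hr]; rw [hr]; field_simp; ring)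
      convert this using 1
      funext j
      fin_cases j <;>
        simp [Fin.sum_univ_four, Matrix.vecHead, Matrix.vecTail] <;> field_simp [hr] <;> ring
    rcases hmem _ hP with h0 | hVmem
    · have := congrFun h0 2
      simp at this
    · simp only [hV, Set.mem_insert_iff, Set.mem_singleton_iff] at hVmem
      rcases hVmem with h|h|h|h|h|h
      · have := congrFun h 0; simp at this
      · have := congrFun h 0; simp at this
      · have := congrFun h 2; simp at this
      · have := congrFun h 2; simp at this
      · have := congrFun h 2; simp at this; omega
      · have := congrFun h 2; simp at this; omega
  -- Step 2: if a = b, c = 2*b, 2 ≤ b, then (1,1,2) ∈ P : contradiction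
  have key2 : a = b → c = 2*b → 2 ≤ b → False := by
    intro hab2 hc2b hb2
    have hB : (0:ℝ) < (b:ℝ) := by exact_mod_cast lt_of_lt_of_le two_pos hb2
    have hbne : (b:ℝ) ≠ 0 := ne_of_gt hB
    have hB1 : (1:ℝ) ≤ (b:ℝ) := by exact_mod_cast le_trans one_le_two hb2
    set α : ℝ := ((b:ℝ) - 1) / (4*b) with hα
    have hα0 : 0 ≤ α := by apply div_nonneg (by linarith) (by positivity)
    have hP : toR ![1,1,2] ∈ convexHull ℝ (toR '' V) := by
      rw [toR_eq]
      have := sum_mem_hull (s := toR '' V)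
        ![1/(b:ℝ), α, α, α, α]
        ![![(a:ℝ),(b:ℝ),(c:ℝ)], ![1,0,0], ![-1,0,0], ![0,1,0], ![0,-1,0]]
        (by intro i; fin_cases i <;> simpa using ‹_›)
        (by intro i; fin_cases i <;> simp <;> positivity)
        (by simp [Fin.sum_univ_five, Matrix.vecHead, Matrix.vecTail]; field_simp [hα]; rw [hα]; field_simp; ring)
      convert this using 1
      funext j
      have hA' : (a:ℝ) = (b:ℝ) := by exact_mod_cast hab2
      have hC' : (c:ℝ) = 2*(b:ℝ) := by exact_mod_cast hc2b
      fin_cases j <;>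
        simp [Fin.sum_univ_five, hA', hC', Matrix.vecHead, Matrix.vecTail] <;> field_simp [hα] <;> ring
    rcases hmem _ hP with h0 | hVmem
    · have := congrFun h0 2
      simp at this
    · simp only [hV, Set.mem_insert_iff, Set.mem_singleton_iff] at hVmem
      rcases hVmem with h|h|h|h|h|h
      · have := congrFun h 1; simp at this
      · have := congrFun h 0; simp at this
      · have := congrFun h 0; simp at this
      · have := congrFun h 0; simp at this
      · have := congrFun h 2; simp at this; omega
      · have := congrFun h 2; simp at this; omega
  -- conclude
  by_cases hc1 : c = 1
  · left
    have hb0 : b = 0 := by omega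
    have ha0 : a = 0 := by omega
    simp [Prod.ext_iff, ha0, hb0, hc1]
  · right
    have hc2 : 2 ≤ c := by omega
    have h1 : c ≤ a + b := by
      by_contra h
      exact key1 hc2 (by omega)
    have hA : a = b := by omega
    have hC : c = 2*b := by omega
    have hb1 : b ≤ 1 := by
      by_contra h
      exact key2 hA hC (by omega)
    simp [Prod.ext_iff]
    omega
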